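/- arXiv:1706.03516 — 2 statements merged into one kernel-verified Lean document; each statement's English description precedes it below -/
import Mathlib

section
/- The generalized Hurwitz-Lerch zeta function of two variables Φ_{μ,η,η',δ,δ';ν,ξ,ξ'}(z,t,s,a) admits the integral representation (1/Γ(s)) ∫₀^∞ x^{s-1} e^{-ax} M₄(μ,η,η',δ,δ'; ν,ξ,ξ'; z e^{-x}, t e^{-x}) dx, for min{Re(s), Re(a)} > 0 and |z| < 1, |t| < 1. -/
open MeasureTheory Set Complex

noncomputable def pch (x : ℂ) (n : ℕ) : ℂ := (ascPochhammer ℂ n).eval x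

/-- The further extended Hurwitz-Lerch zeta function of two variables. -/
noncomputable def Phi (μ η η' δ δ' ν ξ ξ' z t s a : ℂ) : ℂ :=
  ∑' p : ℕ × ℕ,
    (pch μ (p.1 + p.2) * pch η p.1 * pch η' p.2 * pch δ p.1 * pch δ' p.2) /
        (pch ν (p.1 + p.2) * pch ξ p.1 * pch ξ' p.2 * (p.1.factorial : ℂ) *
          (p.2.factorial : ℂ)) *
      (z ^ p.1 * t ^ p.2 / ((p.1 : ℂ) + (p.2 : ℂ) + a) ^ s)

/-- The Appell-type function M₄. -/
noncomputable def M4 (μ η η' δ δ' ν ξ ξ' x y : ℂ) : ℂ :=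
  ∑' p : ℕ × ℕ,
    (pch μ (p.1 + p.2) * pch η p.1 * pch η' p.2 * pch δ p.1 * pch δ' p.2) /
        (pch ν (p.1 + p.2) * pch ξ p.1 * pch ξ' p.2) *
      (x ^ p.1 / (p.1.factorial : ℂ)) * (y ^ p.2 / (p.2.factorial : ℂ))

lemma norm_cpow_mul_cexp (s w : ℂ) {x : ℝ} (hx : 0 < x) :
    ‖(x : ℂ) ^ (s - 1) * Complex.exp (-w * x)‖ = x ^ (s.re - 1) * Real.exp (-w.re * x) := by
  rw [norm_mul, norm_cpow_eq_rpow_re_of_pos hx,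
    Complex.norm_exp, sub_re, one_re]
  congr 2
  simp [Complex.neg_re, Complex.mul_re]

lemma integrableOn_rpow_mul_exp_neg {r : ℝ} (hr : -1 < r) {b : ℝ} (hb : 0 < b) :
    IntegrableOn (fun x : ℝ => x ^ r * Real.exp (-b * x)) (Ioi 0) := by
  have := integrableOn_rpow_mul_exp_neg_mul_rpow (p := 1) hr zero_lt_one hb
  refine this.congr_fun (fun x hx => ?_) measurableSet_Ioi
  simp only [Real.rpow_one]

lemma aesm_cpow_mul_cexp (s w : ℂ) :
    AEStronglyMeasurable (fun x : ℝ => (x : ℂ) ^ (s - 1) * Complex.exp (-w * x))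
      (volume.restrict (Ioi 0)) := by
  refine (ContinuousOn.mul ?_ ?_).aestronglyMeasurable measurableSet_Ioi
  · intro x hx
    exact (Complex.continuousAt_ofReal_cpow_const x _ (Or.inr (ne_of_gt hx))).continuousWithinAt
  · exact (Complex.continuous_exp.comp
      ((continuous_const.mul Complex.continuous_ofReal))).continuousOn

lemma integrableOn_cpow_mul_cexp {s : ℂ} (hs : 0 < s.re) {w : ℂ} (hw : 0 < w.re) :
    IntegrableOn (fun x : ℝ => (x : ℂ) ^ (s - 1) * Complex.exp (-w * x)) (Ioi 0) := by
  refine ⟨aesm_cpow_mul_cexp s w, ?_⟩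
  refine HasFiniteIntegral.mono' (integrableOn_rpow_mul_exp_neg (r := s.re - 1) (by linarith) hw).2 ?_
  filter_upwards [ae_restrict_mem measurableSet_Ioi] with x hx
  exact le_of_eq (norm_cpow_mul_cexp s w hx)

lemma integral_cpow_mul_cexp_eq {s : ℂ} (hs : 0 < s.re) :
    ∀ w : ℂ, 0 < w.re →
      (∫ x : ℝ in Ioi 0, (x : ℂ) ^ (s - 1) * Complex.exp (-w * x))
        = Complex.Gamma s * w ^ (-s) := by
  set f : ℂ → ℂ := fun w => ∫ x : ℝ in Ioi 0, (x : ℂ) ^ (s - 1) * Complex.exp (-w * x) with hfdef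
  set g : ℂ → ℂ := fun w => Complex.Gamma s * w ^ (-s) with hgdef
  set U : Set ℂ := {w : ℂ | 0 < w.re} with hUdef
  have hUo : IsOpen U := isOpen_lt continuous_const Complex.continuous_re
  have hf : AnalyticOnNhd ℂ f U := by
    refine DifferentiableOn.analyticOnNhd (fun w₀ hw₀ => DifferentiableAt.differentiableWithinAt ?_) hUo
    have hw₀ : 0 < w₀.re := hw₀
    have hε : 0 < w₀.re / 2 := by linarith
    have key := hasDerivAt_integral_of_dominated_loc_of_deriv_le (μ := volume.restrict (Ioi 0))
      (F := fun w (x : ℝ) => (x : ℂ) ^ (s - 1) * Complex.exp (-w * x))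
      (F' := fun w (x : ℝ) => -(x : ℂ) * ((x : ℂ) ^ (s - 1) * Complex.exp (-w * x)))
      (x₀ := w₀) (bound := fun x : ℝ => x ^ s.re * Real.exp (-(w₀.re / 2) * x)) (Metric.ball_mem_nhds w₀ hε)
      (Filter.Eventually.of_forall (fun w => aesm_cpow_mul_cexp s w))
      (integrableOn_cpow_mul_cexp hs hw₀)
      ?_ ?_ ?_ ?_
    · exact key.2.differentiableAt
    · -- measurability of F' w₀
      exact (Complex.continuous_ofReal.aestronglyMeasurable.neg.mul (aesm_cpow_mul_cexp s w₀))
    · -- bound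
      filter_upwards [ae_restrict_mem measurableSet_Ioi] with x hx
      intro w hw
      have hx : (0:ℝ) < x := hx
      have hre : w₀.re / 2 ≤ w.re := by
        have h1 : |(w - w₀).re| ≤ ‖w - w₀‖ := Complex.abs_re_le_norm _
        have h2 : ‖w - w₀‖ < w₀.re / 2 := by
          rwa [Metric.mem_ball, Complex.dist_eq] at hw
        have := abs_le.1 h1
        simp only [Complex.sub_re] at this
        linarith [this.1, h2]
      rw [norm_mul, norm_neg, Complex.norm_of_nonneg hx.le,
         norm_cpow_mul_cexp s w hx, ← mul_assoc]
      have h3 : x * x ^ (s.re - 1) = x ^ s.re := by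
        rw [mul_comm, ← Real.rpow_add_one hx.ne']
        ring_nf
      rw [h3]
      have : Real.exp (-w.re * x) ≤ Real.exp (-(w₀.re / 2) * x) := by
        apply Real.exp_le_exp.2
        nlinarith
      have hpow : (0:ℝ) ≤ x ^ s.re := Real.rpow_nonneg hx.le _
      nlinarith [this, hpow, Real.exp_pos (-w.re * x)]
    · -- bound integrable
      exact integrableOn_rpow_mul_exp_neg (r := s.re) (by linarith) hε
    · -- differentiability pointwise
      filter_upwards [ae_restrict_mem measurableSet_Ioi] with x hx
      intro w _
      have h1 : HasDerivAt (fun w : ℂ => -w * (x:ℂ)) (-1 * (x:ℂ)) w :=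
        (hasDerivAt_id w).neg.mul_const _
      have h2 := (h1.cexp).const_mul ((x:ℂ) ^ (s - 1))
      refine h2.congr_deriv ?_
      ring
  have hg : AnalyticOnNhd ℂ g U := by
    refine DifferentiableOn.analyticOnNhd (fun w hw => DifferentiableAt.differentiableWithinAt ?_) hUo
    exact ((differentiableAt_id.cpow (differentiableAt_const _) (Or.inl hw)).const_mul _)
  have key : ∀ r : ℝ, 0 < r → f ((r : ℝ) : ℂ) = g ((r : ℝ) : ℂ) := by
    intro r hr
    have h := Complex.integral_cpow_mul_exp_neg_mul_Ioi hs hr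
    have h2 : f ((r : ℝ) : ℂ) = (1 / (r:ℂ)) ^ s * Complex.Gamma s := by
      rw [hfdef]
      simp only [neg_mul]
      exact h
    rw [h2, hgdef]
    rw [one_div, inv_cpow _ _ (by
      rw [Complex.arg_ofReal_of_nonneg hr.le]
      exact Real.pi_ne_zero.symm), ← Complex.cpow_neg, mul_comm]
  have freq : ∃ᶠ zz in nhdsWithin (1 : ℂ) {(1:ℂ)}ᶜ, f zz = g zz := by
    have htend : Filter.Tendsto (fun n : ℕ => ((1 + ((n:ℝ)+1)⁻¹ : ℝ) : ℂ)) Filter.atTop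
        (nhdsWithin (1 : ℂ) {(1:ℂ)}ᶜ) := by
      rw [tendsto_nhdsWithin_iff]
      constructor
      · have : Filter.Tendsto (fun n : ℕ => (1 + ((n:ℝ)+1)⁻¹ : ℝ)) Filter.atTop (nhds 1) := by
          have := tendsto_one_div_add_atTop_nhds_zero_nat (𝕜 := ℝ)
          simp only [one_div] at this
          simpa using (tendsto_const_nhds.add this)
        have h2 := (Complex.continuous_ofReal.tendsto (1:ℝ)).comp this
        rw [show ((1:ℂ)) = ((1:ℝ):ℂ) by norm_num]
        exact h2
      · refine Filter.Eventually.of_forall (fun n => ?_)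
        simp only [mem_compl_iff, mem_singleton_iff]
        intro hcon
        rw [show ((1:ℂ)) = ((1:ℝ):ℂ) by norm_num] at hcon
        have := Complex.ofReal_injective hcon
        have hpos : (0:ℝ) < ((n:ℝ)+1)⁻¹ := by positivity
        linarith [this]
    exact htend.frequently (Filter.Frequently.of_forall (fun n => key _ (by positivity)))
  have heq := hf.eqOn_of_preconnected_of_frequently_eq hg
    (convex_halfSpace_re_gt 0).isPreconnected (show (1:ℂ) ∈ U by simp [hUdef]) freq
  intro w hw
  exact heq hw


lemma pch_eq_prod (x : ℂ) (n : ℕ) : pch x n = ∏ j ∈ Finset.range n, (x + j) := by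
  induction n with
  | zero => simp [pch]
  | succ n ih =>
    rw [pch, ascPochhammer_succ_eval, ← pch, ih, Finset.prod_range_succ]

lemma norm_pch (x : ℂ) (n : ℕ) : ‖pch x n‖ = ∏ j ∈ Finset.range n, ‖x + (j:ℂ)‖ := by
  rw [pch_eq_prod, norm_prod]

lemma ratio_pow_ge (m j : ℕ) : 1 + (m:ℝ)/((j:ℝ)+1) ≤ (((j:ℝ)+2)/((j:ℝ)+1))^m := by
  have hj : (0:ℝ) < (j:ℝ)+1 := by positivity
  have h : (((j:ℝ)+2)/((j:ℝ)+1)) = 1 + 1/((j:ℝ)+1) := by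
    field_simp
    ring
  rw [h]
  have hb : (-2:ℝ) ≤ 1/((j:ℝ)+1) := by
    have : (0:ℝ) ≤ 1/((j:ℝ)+1) := by positivity
    linarith
  have := one_add_mul_le_pow hb m
  calc 1 + (m:ℝ)/((j:ℝ)+1) = 1 + (m:ℝ) * (1/((j:ℝ)+1)) := by ring
  _ ≤ (1 + 1/((j:ℝ)+1))^m := this

lemma num_factor_le (x : ℂ) : ∃ m : ℕ, ∀ j : ℕ,
    ‖x + (j:ℂ)‖ / ((j:ℝ)+1) ≤ (((j:ℝ)+2)/((j:ℝ)+1))^m := by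
  refine ⟨⌈‖x‖⌉₊, fun j => ?_⟩
  have hj : (0:ℝ) < (j:ℝ)+1 := by positivity
  refine le_trans ?_ (ratio_pow_ge _ j)
  rw [div_le_iff₀ hj]
  have h1 : ‖x + (j:ℂ)‖ ≤ ‖x‖ + (j:ℝ) := by
    calc ‖x + (j:ℂ)‖ ≤ ‖x‖ + ‖((j:ℕ):ℂ)‖ := norm_add_le _ _
    _ = ‖x‖ + (j:ℝ) := by norm_num
  have h2 : ‖x‖ ≤ (⌈‖x‖⌉₊ : ℝ) := Nat.le_ceil _
  have h3 : (1 + (⌈‖x‖⌉₊:ℝ)/((j:ℝ)+1)) * ((j:ℝ)+1) = (j:ℝ) + 1 + (⌈‖x‖⌉₊:ℝ) := by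
    field_simp
  rw [h3]
  linarith

lemma den_factor_le (x : ℂ) (hx : ∀ n : ℕ, x ≠ -(n:ℂ)) :
    (∀ j : ℕ, 0 < ‖x + (j:ℂ)‖) ∧ ∃ m j0 : ℕ, ∀ j : ℕ, j0 ≤ j →
      ((j:ℝ)+1) / ‖x + (j:ℂ)‖ ≤ (((j:ℝ)+2)/((j:ℝ)+1))^m := by
  have hpos : ∀ j : ℕ, 0 < ‖x + (j:ℂ)‖ := by
    intro j
    rw [norm_pos_iff]
    intro hc
    exact hx j (by linear_combination hc)
  refine ⟨hpos, ⌈2*‖x‖+2⌉₊, ⌈2*‖x‖+2⌉₊, fun j hj => ?_⟩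
  have hj1 : (0:ℝ) < (j:ℝ)+1 := by positivity
  have hjx : 2*‖x‖+2 ≤ (j:ℝ) := by
    calc 2*‖x‖+2 ≤ (⌈2*‖x‖+2⌉₊ : ℝ) := Nat.le_ceil _
    _ ≤ (j:ℝ) := Nat.cast_le.2 hj
  have hm : 2*‖x‖+2 ≤ (⌈2*‖x‖+2⌉₊ : ℝ) := Nat.le_ceil _
  have hN : (j:ℝ) - ‖x‖ ≤ ‖x + (j:ℂ)‖ := by
    have : ‖((j:ℕ):ℂ)‖ ≤ ‖x + (j:ℂ)‖ + ‖x‖ := by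
      calc ‖((j:ℕ):ℂ)‖ = ‖(x + (j:ℂ)) - x‖ := by ring_nf
      _ ≤ ‖x + (j:ℂ)‖ + ‖x‖ := norm_sub_le _ _
    have hn : ‖((j:ℕ):ℂ)‖ = (j:ℝ) := by norm_num
    linarith [this, hn ▸ this]
  refine le_trans ?_ (ratio_pow_ge _ j)
  have hx0 : (0:ℝ) ≤ ‖x‖ := norm_nonneg x
  have hNpos : (0:ℝ) < ‖x + (j:ℂ)‖ := hpos j
  have hrw : 1 + (⌈2*‖x‖+2⌉₊:ℝ)/((j:ℝ)+1) = (((j:ℝ)+1)+(⌈2*‖x‖+2⌉₊:ℝ))/((j:ℝ)+1) := by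
    field_simp
  rw [hrw, div_le_div_iff₀ hNpos hj1]
  nlinarith [mul_le_mul_of_nonneg_left hN
      (by positivity : (0:ℝ) ≤ ((j:ℝ)+1)+(⌈2*‖x‖+2⌉₊:ℝ)),
    mul_le_mul_of_nonneg_right hm (by linarith : (0:ℝ) ≤ (j:ℝ) - ‖x‖), hjx, hx0]

lemma telescope_Ico (j0 : ℕ) : ∀ n : ℕ, j0 ≤ n →
    ∏ j ∈ Finset.Ico j0 n, (((j:ℝ)+2)/((j:ℝ)+1)) = ((n:ℝ)+1)/((j0:ℝ)+1) := by
  intro n hn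
  induction n, hn using Nat.le_induction with
  | base =>
    simp only [Finset.Ico_self, Finset.prod_empty]
    rw [eq_comm, div_self]
    positivity
  | succ n hn ih =>
    rw [Finset.prod_Ico_succ_top hn, ih]
    have h1 : ((n:ℝ)+1) ≠ 0 := by positivity
    have h2 : ((j0:ℝ)+1) ≠ 0 := by positivity
    field_simp
    push_cast
    ring

lemma prod_le_of_factor_le {f : ℕ → ℝ} (hf : ∀ j, 0 ≤ f j) {m j0 : ℕ}
    (h : ∀ j, j0 ≤ j → f j ≤ (((j:ℝ)+2)/((j:ℝ)+1))^m) :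
    ∃ C : ℝ, 0 < C ∧ ∀ n : ℕ, ∏ j ∈ Finset.range n, f j ≤ C * ((n:ℝ)+1)^m := by
  refine ⟨∏ j ∈ Finset.range j0, max 1 (f j), Finset.prod_pos (fun j _ => by positivity), fun n => ?_⟩
  have hone : (1:ℝ) ≤ ((n:ℝ)+1)^m := by
    calc (1:ℝ) = 1^m := (one_pow m).symm
    _ ≤ ((n:ℝ)+1)^m := by
        apply pow_le_pow_left₀ zero_le_one
        linarith [Nat.cast_nonneg (α := ℝ) n]
  rcases le_total n j0 with hn | hn
  · have h1 : ∏ j ∈ Finset.range n, f j ≤ ∏ j ∈ Finset.range n, max 1 (f j) :=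
      Finset.prod_le_prod (fun j _ => hf j) (fun j _ => le_max_right _ _)
    have h2 : ∏ j ∈ Finset.range n, max 1 (f j) ≤ ∏ j ∈ Finset.range j0, max 1 (f j) := by
      rw [← Finset.prod_range_mul_prod_Ico (fun j => max 1 (f j)) hn]
      refine le_mul_of_one_le_right (Finset.prod_nonneg (fun j _ => by positivity)) ?_
      calc (1:ℝ) = ∏ j ∈ Finset.Ico n j0, 1 := (Finset.prod_const_one).symm
      _ ≤ ∏ j ∈ Finset.Ico n j0, max 1 (f j) :=
          Finset.prod_le_prod (fun j _ => zero_le_one) (fun j _ => le_max_left _ _)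
    calc ∏ j ∈ Finset.range n, f j ≤ ∏ j ∈ Finset.range j0, max 1 (f j) := le_trans h1 h2
    _ ≤ _ := le_mul_of_one_le_right (Finset.prod_pos (fun j _ => by positivity)).le hone
  · rw [← Finset.prod_range_mul_prod_Ico f hn]
    have h1 : ∏ j ∈ Finset.range j0, f j ≤ ∏ j ∈ Finset.range j0, max 1 (f j) :=
      Finset.prod_le_prod (fun j _ => hf j) (fun j _ => le_max_right _ _)
    have h2 : ∏ j ∈ Finset.Ico j0 n, f j ≤ ((n:ℝ)+1)^m := by
      calc ∏ j ∈ Finset.Ico j0 n, f j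
          ≤ ∏ j ∈ Finset.Ico j0 n, (((j:ℝ)+2)/((j:ℝ)+1))^m :=
            Finset.prod_le_prod (fun j _ => hf j) (fun j hj => h j (Finset.mem_Ico.1 hj).1)
      _ = (∏ j ∈ Finset.Ico j0 n, (((j:ℝ)+2)/((j:ℝ)+1)))^m := by rw [Finset.prod_pow]
      _ = (((n:ℝ)+1)/((j0:ℝ)+1))^m := by rw [telescope_Ico j0 n hn]
      _ ≤ ((n:ℝ)+1)^m := by
          apply pow_le_pow_left₀ (by positivity)
          apply div_le_self (by positivity)
          linarith [Nat.cast_nonneg (α := ℝ) j0]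
    exact mul_le_mul h1 h2 (Finset.prod_nonneg (fun j _ => hf j))
      (Finset.prod_nonneg (fun j _ => by positivity))

lemma prod_range_add_one_eq_fact (n : ℕ) :
    ∏ j ∈ Finset.range n, ((j:ℝ)+1) = (n.factorial : ℝ) := by
  induction n with
  | zero => simp
  | succ n ih => rw [Finset.prod_range_succ, ih, Nat.factorial_succ]; push_cast; ring

lemma coeff_norm_bound (μ η η' δ δ' ν ξ ξ' : ℂ)
    (hν : ∀ n : ℕ, ν ≠ -(n : ℂ)) (hξ : ∀ n : ℕ, ξ ≠ -(n : ℂ)) (hξ' : ∀ n : ℕ, ξ' ≠ -(n : ℂ)) :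
    ∃ C : ℝ, 0 < C ∧ ∃ M : ℕ, ∀ k l : ℕ,
      ‖(pch μ (k + l) * pch η k * pch η' l * pch δ k * pch δ' l) /
        (pch ν (k + l) * pch ξ k * pch ξ' l * (k.factorial : ℂ) * (l.factorial : ℂ))‖
        ≤ C * (((k:ℝ)+1)^M * ((l:ℝ)+1)^M) := by
  obtain ⟨mμ, hmμ⟩ := num_factor_le μ
  obtain ⟨mη, hmη⟩ := num_factor_le η
  obtain ⟨mη', hmη'⟩ := num_factor_le η'
  obtain ⟨mδ, hmδ⟩ := num_factor_le δ
  obtain ⟨mδ', hmδ'⟩ := num_factor_le δ'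
  obtain ⟨hνpos, mν, jν, hmν⟩ := den_factor_le ν hν
  obtain ⟨hξpos, mξ, jξ, hmξ⟩ := den_factor_le ξ hξ
  obtain ⟨hξ'pos, mξ', jξ', hmξ'⟩ := den_factor_le ξ' hξ'
  set fA : ℕ → ℝ := fun j => (‖μ + (j:ℂ)‖/((j:ℝ)+1)) * (((j:ℝ)+1)/‖ν + (j:ℂ)‖) with hfA
  set fB : ℕ → ℝ := fun j =>
    (‖η + (j:ℂ)‖/((j:ℝ)+1)) * (‖δ + (j:ℂ)‖/((j:ℝ)+1)) * (((j:ℝ)+1)/‖ξ + (j:ℂ)‖) with hfB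
  set fC : ℕ → ℝ := fun j =>
    (‖η' + (j:ℂ)‖/((j:ℝ)+1)) * (‖δ' + (j:ℂ)‖/((j:ℝ)+1)) * (((j:ℝ)+1)/‖ξ' + (j:ℂ)‖) with hfC
  have hfA0 : ∀ j, 0 ≤ fA j := fun j => by positivity
  have hfB0 : ∀ j, 0 ≤ fB j := fun j => by positivity
  have hfC0 : ∀ j, 0 ≤ fC j := fun j => by positivity
  have hAf : ∀ j, jν ≤ j → fA j ≤ (((j:ℝ)+2)/((j:ℝ)+1))^(mμ + mν) := by
    intro j hj
    rw [pow_add]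
    exact mul_le_mul (hmμ j) (hmν j hj) (by positivity) (by positivity)
  have hBf : ∀ j, jξ ≤ j → fB j ≤ (((j:ℝ)+2)/((j:ℝ)+1))^(mη + mδ + mξ) := by
    intro j hj
    rw [pow_add, pow_add]
    exact mul_le_mul (mul_le_mul (hmη j) (hmδ j) (by positivity) (by positivity))
      (hmξ j hj) (by positivity) (by positivity)
  have hCf : ∀ j, jξ' ≤ j → fC j ≤ (((j:ℝ)+2)/((j:ℝ)+1))^(mη' + mδ' + mξ') := by
    intro j hj
    rw [pow_add, pow_add]
    exact mul_le_mul (mul_le_mul (hmη' j) (hmδ' j) (by positivity) (by positivity))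
      (hmξ' j hj) (by positivity) (by positivity)
  obtain ⟨CA, hCA, hA⟩ := prod_le_of_factor_le hfA0 hAf
  obtain ⟨CB, hCB, hB⟩ := prod_le_of_factor_le hfB0 hBf
  obtain ⟨CC, hCC, hC⟩ := prod_le_of_factor_le hfC0 hCf
  set mA := mμ + mν
  set mB := mη + mδ + mξ
  set mC := mη' + mδ' + mξ'
  refine ⟨CA * CB * CC, by positivity, mA + mB + mC, fun k l => ?_⟩
  set M := mA + mB + mC
  have hk1 : (1:ℝ) ≤ (k:ℝ)+1 := by linarith [Nat.cast_nonneg (α := ℝ) k]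
  have hl1 : (1:ℝ) ≤ (l:ℝ)+1 := by linarith [Nat.cast_nonneg (α := ℝ) l]
  -- norm equals product of factor products
  have hnorm : ‖(pch μ (k + l) * pch η k * pch η' l * pch δ k * pch δ' l) /
        (pch ν (k + l) * pch ξ k * pch ξ' l * (k.factorial : ℂ) * (l.factorial : ℂ))‖
      = (∏ j ∈ Finset.range (k+l), fA j) * (∏ j ∈ Finset.range k, fB j) *
        (∏ j ∈ Finset.range l, fC j) := by
    have e1 : ∀ x : ℂ, ∀ n : ℕ, ‖pch x n‖ = ∏ j ∈ Finset.range n, ‖x + (j:ℂ)‖ := norm_pch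
    have hfA' : ∀ j : ℕ, fA j = ‖μ + (j:ℂ)‖ / ‖ν + (j:ℂ)‖ := by
      intro j
      rw [hfA]
      have hj : ((j:ℝ)+1) ≠ 0 := by positivity
      field_simp
    have hfB' : ∀ j : ℕ, fB j = (‖η + (j:ℂ)‖ * ‖δ + (j:ℂ)‖) / (((j:ℝ)+1) * ‖ξ + (j:ℂ)‖) := by
      intro j
      rw [hfB]
      have hj : ((j:ℝ)+1) ≠ 0 := by positivity
      have hc : ‖ξ + (j:ℂ)‖ ≠ 0 := (hξpos j).ne'
      show ‖η + (j:ℂ)‖/((j:ℝ)+1) * (‖δ + (j:ℂ)‖/((j:ℝ)+1)) * (((j:ℝ)+1)/‖ξ + (j:ℂ)‖) = _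
      rw [div_mul_div_comm, div_mul_div_comm,
        div_eq_div_iff (by exact mul_ne_zero (mul_ne_zero hj hj) hc) (mul_ne_zero hj hc)]
      ring
    have hfC' : ∀ j : ℕ, fC j = (‖η' + (j:ℂ)‖ * ‖δ' + (j:ℂ)‖) / (((j:ℝ)+1) * ‖ξ' + (j:ℂ)‖) := by
      intro j
      rw [hfC]
      have hj : ((j:ℝ)+1) ≠ 0 := by positivity
      have hc : ‖ξ' + (j:ℂ)‖ ≠ 0 := (hξ'pos j).ne'
      show ‖η' + (j:ℂ)‖/((j:ℝ)+1) * (‖δ' + (j:ℂ)‖/((j:ℝ)+1)) * (((j:ℝ)+1)/‖ξ' + (j:ℂ)‖) = _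
      rw [div_mul_div_comm, div_mul_div_comm,
        div_eq_div_iff (by exact mul_ne_zero (mul_ne_zero hj hj) hc) (mul_ne_zero hj hc)]
      ring
    rw [norm_div]
    simp only [norm_mul, e1, Complex.norm_natCast]
    rw [← prod_range_add_one_eq_fact k, ← prod_range_add_one_eq_fact l]
    rw [show ∏ j ∈ Finset.range (k+l), fA j
        = (∏ j ∈ Finset.range (k+l), ‖μ + (j:ℂ)‖) / (∏ j ∈ Finset.range (k+l), ‖ν + (j:ℂ)‖)
      from by rw [← Finset.prod_div_distrib]; exact Finset.prod_congr rfl (fun j _ => hfA' j)]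
    rw [show ∏ j ∈ Finset.range k, fB j
        = ((∏ j ∈ Finset.range k, ‖η + (j:ℂ)‖) * (∏ j ∈ Finset.range k, ‖δ + (j:ℂ)‖)) /
          ((∏ j ∈ Finset.range k, ((j:ℝ)+1)) * (∏ j ∈ Finset.range k, ‖ξ + (j:ℂ)‖))
      from by
        rw [← Finset.prod_mul_distrib, ← Finset.prod_mul_distrib, ← Finset.prod_div_distrib]
        exact Finset.prod_congr rfl (fun j _ => hfB' j)]
    rw [show ∏ j ∈ Finset.range l, fC j
        = ((∏ j ∈ Finset.range l, ‖η' + (j:ℂ)‖) * (∏ j ∈ Finset.range l, ‖δ' + (j:ℂ)‖)) /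
          ((∏ j ∈ Finset.range l, ((j:ℝ)+1)) * (∏ j ∈ Finset.range l, ‖ξ' + (j:ℂ)‖))
      from by
        rw [← Finset.prod_mul_distrib, ← Finset.prod_mul_distrib, ← Finset.prod_div_distrib]
        exact Finset.prod_congr rfl (fun j _ => hfC' j)]
    rw [div_mul_div_comm, div_mul_div_comm]
    congr 1 <;> ring
  rw [hnorm]
  have hAkl : (∏ j ∈ Finset.range (k+l), fA j) ≤ CA * (((k:ℝ)+1) * ((l:ℝ)+1))^mA := by
    refine le_trans (hA (k+l)) ?_
    have h1 : ((k+l:ℕ):ℝ) + 1 ≤ ((k:ℝ)+1) * ((l:ℝ)+1) := by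
      push_cast
      nlinarith [Nat.cast_nonneg (α := ℝ) k, Nat.cast_nonneg (α := ℝ) l]
    exact mul_le_mul_of_nonneg_left (pow_le_pow_left₀ (by positivity) h1 mA) hCA.le
  have hBk := hB k
  have hCl := hC l
  calc (∏ j ∈ Finset.range (k+l), fA j) * (∏ j ∈ Finset.range k, fB j) *
        (∏ j ∈ Finset.range l, fC j)
      ≤ (CA * (((k:ℝ)+1) * ((l:ℝ)+1))^mA) * (CB * ((k:ℝ)+1)^mB) * (CC * ((l:ℝ)+1)^mC) := by
        refine mul_le_mul (mul_le_mul hAkl hBk (Finset.prod_nonneg (fun j _ => hfB0 j))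
          (by positivity)) hCl (Finset.prod_nonneg (fun j _ => hfC0 j)) (by positivity)
  _ = (CA * CB * CC) * (((k:ℝ)+1)^(mA+mB) * ((l:ℝ)+1)^(mA+mC)) := by
      rw [mul_pow]
      ring
  _ ≤ (CA * CB * CC) * (((k:ℝ)+1)^M * ((l:ℝ)+1)^M) := by
      refine mul_le_mul_of_nonneg_left ?_ (by positivity)
      refine mul_le_mul (pow_le_pow_right₀ hk1 (by omega)) (pow_le_pow_right₀ hl1 (by omega))
        (by positivity) (by positivity)

lemma summable_pow_mul_geom (M : ℕ) {r : ℝ} (h0 : 0 ≤ r) (h1 : r < 1) :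
    Summable (fun n : ℕ => ((n:ℝ)+1)^M * r^n) := by
  have hs : Summable (fun n : ℕ => (2:ℝ)^M * ((n:ℝ)^M * r^n) + (2:ℝ)^M * r^n) :=
    ((summable_pow_mul_geometric_of_norm_lt_one (R := ℝ) M
      (by rwa [Real.norm_eq_abs, _root_.abs_of_nonneg h0])).mul_left _).add
      ((summable_geometric_of_lt_one h0 h1).mul_left _)
  refine Summable.of_nonneg_of_le (fun n => by positivity) (fun n => ?_) hs
  have h2M : (1:ℝ) ≤ 2^M := by
    calc (1:ℝ) = 1^M := (one_pow M).symm
    _ ≤ 2^M := pow_le_pow_left₀ zero_le_one one_le_two M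
  have hb : ((n:ℝ)+1)^M ≤ 2^M * (n:ℝ)^M + 2^M := by
    rcases Nat.eq_zero_or_pos n with hn | hn
    · subst hn
      have : (0:ℝ) ≤ 2^M * (0:ℝ)^M := by positivity
      norm_num
      linarith
    · have hn1 : (1:ℝ) ≤ (n:ℝ) := by exact_mod_cast hn
      calc ((n:ℝ)+1)^M ≤ (2*(n:ℝ))^M := pow_le_pow_left₀ (by positivity) (by linarith) M
      _ = 2^M * (n:ℝ)^M := by rw [mul_pow]
      _ ≤ 2^M * (n:ℝ)^M + 2^M := le_add_of_nonneg_right (by positivity)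
  calc ((n:ℝ)+1)^M * r^n ≤ (2^M * (n:ℝ)^M + 2^M) * r^n :=
    mul_le_mul_of_nonneg_right hb (by positivity)
  _ = 2^M * ((n:ℝ)^M * r^n) + 2^M * r^n := by ring

lemma summable_coeff_mul_geom {c : ℕ → ℕ → ℝ} {C : ℝ} {M : ℕ}
    (hC : 0 ≤ C) (hc0 : ∀ k l, 0 ≤ c k l)
    (hc : ∀ k l, c k l ≤ C * (((k:ℝ)+1)^M * ((l:ℝ)+1)^M))
    {r1 r2 : ℝ} (h10 : 0 ≤ r1) (h11 : r1 < 1) (h20 : 0 ≤ r2) (h21 : r2 < 1) :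
    Summable (fun p : ℕ × ℕ => c p.1 p.2 * r1^p.1 * r2^p.2) := by
  have hs := ((summable_pow_mul_geom M h10 h11).mul_of_nonneg
    (summable_pow_mul_geom M h20 h21)
    (Pi.le_def.mpr (fun n => by positivity)) (Pi.le_def.mpr (fun n => by positivity))).mul_left C
  refine Summable.of_nonneg_of_le
    (fun p => by
      have := hc0 p.1 p.2
      positivity)
    (fun p => ?_) hs
  calc c p.1 p.2 * r1^p.1 * r2^p.2
      ≤ (C * (((p.1:ℝ)+1)^M * ((p.2:ℝ)+1)^M)) * r1^p.1 * r2^p.2 := by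
        refine mul_le_mul_of_nonneg_right (mul_le_mul_of_nonneg_right (hc p.1 p.2)
          (by positivity)) (by positivity)
  _ = C * ((((p.1:ℝ)+1)^M * r1^p.1) * ((((p.2:ℝ)+1))^M * r2^p.2)) := by ring

theorem Phi_integral_rep (μ η η' δ δ' ν ξ ξ' z t s a : ℂ)
    (hν : ∀ n : ℕ, ν ≠ -(n : ℂ)) (hξ : ∀ n : ℕ, ξ ≠ -(n : ℂ))
    (hξ' : ∀ n : ℕ, ξ' ≠ -(n : ℂ)) (ha : ∀ n : ℕ, a ≠ -(n : ℂ))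
    (hs : 0 < s.re) (ha' : 0 < a.re)
    (hz : ‖z‖ < 1) (ht : ‖t‖ < 1) :
    Phi μ η η' δ δ' ν ξ ξ' z t s a =
      (1 / Complex.Gamma s) *
        ∫ x in Ioi (0 : ℝ),
          (x : ℂ) ^ (s - 1) * Complex.exp (-a * x) *
            M4 μ η η' δ δ' ν ξ ξ' (z * Complex.exp (-x)) (t * Complex.exp (-x)) := by
  classical
  have hGamma_ne : Complex.Gamma s ≠ 0 := by
    apply Complex.Gamma_ne_zero
    intro m hm
    rw [hm] at hs
    simp only [Complex.neg_re, Complex.natCast_re] at hs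
    have : (0:ℝ) ≤ (m:ℝ) := Nat.cast_nonneg m
    linarith
  set c : ℕ × ℕ → ℂ := fun p =>
    (pch μ (p.1 + p.2) * pch η p.1 * pch η' p.2 * pch δ p.1 * pch δ' p.2) /
      (pch ν (p.1 + p.2) * pch ξ p.1 * pch ξ' p.2 * (p.1.factorial : ℂ) *
        (p.2.factorial : ℂ)) with hcdef
  set F : ℕ × ℕ → ℝ → ℂ := fun p x =>
    c p * z ^ p.1 * t ^ p.2 *
      ((x:ℂ) ^ (s - 1) * Complex.exp (-(a + (p.1:ℂ) + (p.2:ℂ)) * x)) with hFdef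
  have hw : ∀ p : ℕ × ℕ, 0 < (a + (p.1:ℂ) + (p.2:ℂ)).re := by
    intro p
    simp only [Complex.add_re, Complex.natCast_re]
    have h1 : (0:ℝ) ≤ (p.1:ℝ) := Nat.cast_nonneg _
    have h2 : (0:ℝ) ≤ (p.2:ℝ) := Nat.cast_nonneg _
    linarith
  have hInt : ∀ p : ℕ × ℕ, Integrable (F p) (volume.restrict (Ioi 0)) := by
    intro p
    exact (integrableOn_cpow_mul_cexp hs (hw p)).const_mul _
  have hIval : ∀ p : ℕ × ℕ, (∫ x in Ioi (0:ℝ), F p x)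
      = c p * z ^ p.1 * t ^ p.2 *
        (Complex.Gamma s * (a + (p.1:ℂ) + (p.2:ℂ)) ^ (-s)) := by
    intro p
    rw [hFdef]
    rw [MeasureTheory.integral_const_mul]
    rw [integral_cpow_mul_cexp_eq hs _ (hw p)]
  -- norm bound on integrals
  have hnorm_int_le : ∀ p : ℕ × ℕ, (∫ x in Ioi (0:ℝ), ‖F p x‖)
      ≤ (‖c p‖ * ‖z‖ ^ p.1 * ‖t‖ ^ p.2) *
        ∫ x in Ioi (0:ℝ), x ^ (s.re - 1) * Real.exp (-a.re * x) := by
    intro p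
    have hb : IntegrableOn
        (fun x : ℝ => ‖c p * z ^ p.1 * t ^ p.2‖ * (x ^ (s.re - 1) * Real.exp (-a.re * x)))
        (Ioi 0) :=
      (integrableOn_rpow_mul_exp_neg (r := s.re - 1) (by linarith) ha').const_mul _
    have hle : ∀ x ∈ Ioi (0:ℝ), ‖F p x‖
        ≤ ‖c p * z ^ p.1 * t ^ p.2‖ * (x ^ (s.re - 1) * Real.exp (-a.re * x)) := by
      intro x hx
      rw [hFdef]
      show ‖c p * z ^ p.1 * t ^ p.2 * _‖ ≤ _
      rw [norm_mul, norm_cpow_mul_cexp _ _ hx]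
      refine mul_le_mul_of_nonneg_left ?_ (norm_nonneg _)
      refine mul_le_mul_of_nonneg_left ?_ (Real.rpow_nonneg (le_of_lt hx) _)
      apply Real.exp_le_exp.2
      have h1 : (0:ℝ) ≤ (p.1:ℝ) := Nat.cast_nonneg _
      have h2 : (0:ℝ) ≤ (p.2:ℝ) := Nat.cast_nonneg _
      have hxe : (0:ℝ) < x := hx
      simp only [Complex.add_re, Complex.natCast_re]
      nlinarith
    calc (∫ x in Ioi (0:ℝ), ‖F p x‖)
        ≤ ∫ x in Ioi (0:ℝ),
            ‖c p * z ^ p.1 * t ^ p.2‖ * (x ^ (s.re - 1) * Real.exp (-a.re * x)) :=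
          setIntegral_mono_on (hInt p).norm hb measurableSet_Ioi hle
    _ = ‖c p * z ^ p.1 * t ^ p.2‖ * ∫ x in Ioi (0:ℝ), x ^ (s.re - 1) * Real.exp (-a.re * x) :=
          MeasureTheory.integral_const_mul _ _
    _ = (‖c p‖ * ‖z‖ ^ p.1 * ‖t‖ ^ p.2) *
          ∫ x in Ioi (0:ℝ), x ^ (s.re - 1) * Real.exp (-a.re * x) := by
          simp only [norm_mul, norm_pow]
  have hsumnorm : Summable (fun p : ℕ × ℕ => ∫ x in Ioi (0:ℝ), ‖F p x‖) := by
    obtain ⟨C, hCpos, M, hCM⟩ := coeff_norm_bound μ η η' δ δ' ν ξ ξ' hν hξ hξ'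
    set K := ∫ x in Ioi (0:ℝ), x ^ (s.re - 1) * Real.exp (-a.re * x) with hK
    have hK0 : 0 ≤ K :=
      setIntegral_nonneg measurableSet_Ioi (fun x hx => by
        have : (0:ℝ) < x := hx
        positivity)
    have hg : Summable (fun p : ℕ × ℕ =>
        ‖c (p.1, p.2)‖ * ‖z‖ ^ p.1 * ‖t‖ ^ p.2) := by
      refine summable_coeff_mul_geom (C := C) (M := M) hCpos.le
        (fun k l => norm_nonneg _) (fun k l => hCM k l)
        (norm_nonneg z) hz (norm_nonneg t) ht
    refine Summable.of_nonneg_of_le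
      (fun p => setIntegral_nonneg measurableSet_Ioi (fun x _ => norm_nonneg _))
      (fun p => ?_) (hg.mul_right K)
    have := hnorm_int_le p
    simpa using this
  have hHS := MeasureTheory.hasSum_integral_of_summable_integral_norm hInt hsumnorm
  have htsum_eq : ∑' p : ℕ × ℕ, (∫ x in Ioi (0:ℝ), F p x)
      = ∫ x in Ioi (0:ℝ), ∑' p : ℕ × ℕ, F p x := hHS.tsum_eq
  -- pointwise identity for the integrand
  have hpt : ∀ x ∈ Ioi (0:ℝ),
      (x : ℂ) ^ (s - 1) * Complex.exp (-a * x) *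
          M4 μ η η' δ δ' ν ξ ξ' (z * Complex.exp (-x)) (t * Complex.exp (-x))
        = ∑' p : ℕ × ℕ, F p x := by
    intro x _
    rw [M4, ← tsum_mul_left]
    apply tsum_congr
    intro p
    show (x:ℂ) ^ (s-1) * Complex.exp (-a * x) *
        ((pch μ (p.1 + p.2) * pch η p.1 * pch η' p.2 * pch δ p.1 * pch δ' p.2) /
          (pch ν (p.1 + p.2) * pch ξ p.1 * pch ξ' p.2) *
          ((z * Complex.exp (-(x:ℂ))) ^ p.1 / (p.1.factorial : ℂ)) *
          ((t * Complex.exp (-(x:ℂ))) ^ p.2 / (p.2.factorial : ℂ)))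
      = (pch μ (p.1 + p.2) * pch η p.1 * pch η' p.2 * pch δ p.1 * pch δ' p.2) /
          (pch ν (p.1 + p.2) * pch ξ p.1 * pch ξ' p.2 * (p.1.factorial : ℂ) *
            (p.2.factorial : ℂ)) * z ^ p.1 * t ^ p.2 *
          ((x:ℂ) ^ (s - 1) * Complex.exp (-(a + (p.1:ℂ) + (p.2:ℂ)) * x))
    have he : Complex.exp (-(a + (p.1:ℂ) + (p.2:ℂ)) * x)
        = Complex.exp (-a * x) * Complex.exp (-(x:ℂ)) ^ p.1 *
          Complex.exp (-(x:ℂ)) ^ p.2 := by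
      rw [← Complex.exp_nat_mul, ← Complex.exp_nat_mul, ← Complex.exp_add, ← Complex.exp_add]
      congr 1
      ring
    rw [he, mul_pow, mul_pow]
    simp only [div_eq_mul_inv, mul_inv]
    ring
  -- final assembly
  rw [Phi]
  have hterm : ∀ p : ℕ × ℕ,
      (pch μ (p.1 + p.2) * pch η p.1 * pch η' p.2 * pch δ p.1 * pch δ' p.2) /
          (pch ν (p.1 + p.2) * pch ξ p.1 * pch ξ' p.2 * (p.1.factorial : ℂ) *
            (p.2.factorial : ℂ)) *
        (z ^ p.1 * t ^ p.2 / ((p.1 : ℂ) + (p.2 : ℂ) + a) ^ s)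
      = (1 / Complex.Gamma s) * ∫ x in Ioi (0:ℝ), F p x := by
    intro p
    have hW0 : (a + (p.1:ℂ) + (p.2:ℂ)) ≠ 0 := by
      intro h0
      have := hw p
      rw [h0] at this
      simp at this
    have hWs : (a + (p.1:ℂ) + (p.2:ℂ)) ^ s ≠ 0 := by
      intro h0
      rcases (Complex.cpow_eq_zero_iff _ _).1 h0 with ⟨h1, _⟩
      exact hW0 h1
    rw [hIval p, Complex.cpow_neg]
    show c p * (z ^ p.1 * t ^ p.2 / ((p.1 : ℂ) + (p.2 : ℂ) + a) ^ s) = _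
    rw [show ((p.1 : ℂ) + (p.2 : ℂ) + a) = (a + (p.1:ℂ) + (p.2:ℂ)) from by ring]
    field_simp
  calc ∑' p : ℕ × ℕ,
      (pch μ (p.1 + p.2) * pch η p.1 * pch η' p.2 * pch δ p.1 * pch δ' p.2) /
          (pch ν (p.1 + p.2) * pch ξ p.1 * pch ξ' p.2 * (p.1.factorial : ℂ) *
            (p.2.factorial : ℂ)) *
        (z ^ p.1 * t ^ p.2 / ((p.1 : ℂ) + (p.2 : ℂ) + a) ^ s)
      = ∑' p : ℕ × ℕ, (1 / Complex.Gamma s) * ∫ x in Ioi (0:ℝ), F p x :=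
        tsum_congr hterm
  _ = (1 / Complex.Gamma s) * ∑' p : ℕ × ℕ, ∫ x in Ioi (0:ℝ), F p x := tsum_mul_left
  _ = (1 / Complex.Gamma s) * ∫ x in Ioi (0:ℝ), ∑' p : ℕ × ℕ, F p x := by rw [htsum_eq]
  _ = _ := by
      congr 1
      exact (setIntegral_congr_fun measurableSet_Ioi hpt).symm
end

section
/- For Re(ν) > Re(μ) > 0 and |z| < 1, |t| < 1, the generalized Hurwitz-Lerch zeta function satisfies Φ_{μ,η,η',δ,δ';ν,ξ,ξ'}(z,t,s,a) = (Γ(ν)/(Γ(μ)Γ(ν-μ))) ∫₀^∞ (y^{μ-1}/(1+y)^ν) Ψ(zy/(1+y), ty/(1+y), s, a) dy, where Ψ(u,v,s,a) = ∑_{k,l≥0} (η)_k(η')_l(δ)_k(δ')_l/((ξ)_k(ξ')_l k! l!) · u^k v^l/(k+l+a)^s. -/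
open MeasureTheory Set Complex

/-- The inner zeta-type function Ψ. -/
noncomputable def Psi (η η' δ δ' ξ ξ' u v s a : ℂ) : ℂ :=
  ∑' p : ℕ × ℕ,
    (pch η p.1 * pch η' p.2 * pch δ p.1 * pch δ' p.2) /
        (pch ξ p.1 * pch ξ' p.2 * (p.1.factorial : ℂ) * (p.2.factorial : ℂ)) *
      (u ^ p.1 * v ^ p.2 / ((p.1 : ℂ) + (p.2 : ℂ) + a) ^ s)

open Filter Topology

lemma pch_zero (x : ℂ) : pch x 0 = 1 := by simp [pch]

lemma pch_succ (x : ℂ) (n : ℕ) : pch x (n + 1) = pch x n * (x + n) := by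
  simp [pch, ascPochhammer_succ_right]

lemma pch_ne_zero {x : ℂ} (hx : ∀ n : ℕ, x ≠ -(n : ℂ)) (n : ℕ) : pch x n ≠ 0 := by
  induction n with
  | zero => simp [pch_zero]
  | succ k ih =>
    rw [pch_succ]
    refine mul_ne_zero ih ?_
    intro h
    exact hx k (eq_neg_of_add_eq_zero_left h)

lemma Gamma_pch {x : ℂ} (hx : ∀ n : ℕ, x ≠ -(n : ℂ)) (n : ℕ) :
    Complex.Gamma (x + n) = pch x n * Complex.Gamma x := by
  induction n with
  | zero => simp [pch_zero]
  | succ k ih =>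
    have hxk : x + k ≠ 0 := by
      intro h
      exact hx k (eq_neg_of_add_eq_zero_left h)
    have : x + (k + 1 : ℕ) = (x + k) + 1 := by push_cast; ring
    rw [this, Complex.Gamma_add_one _ hxk, ih, pch_succ]; ring

lemma tendsto_ratio (w : ℂ) : Tendsto (fun k : ℕ => (w + k) / (1 + k)) atTop (𝓝 1) := by
  have h0 : Tendsto (fun k : ℕ => (w - 1) / (1 + k)) atTop (𝓝 0) := by
    apply squeeze_zero_norm (a := fun k : ℕ => ‖w - 1‖ / (1 + k))
    · intro k
      rw [norm_div]
      gcongr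
      rw [show ((1 : ℂ) + k) = ((1 + k : ℝ) : ℂ) by push_cast; ring, Complex.norm_real,
        Real.norm_of_nonneg (by positivity)]
    · have := tendsto_one_div_add_atTop_nhds_zero_nat (𝕜 := ℝ)
      have h2 := this.const_mul ‖w - 1‖
      simpa [div_eq_mul_inv, mul_comm, add_comm] using h2
  have := h0.const_add 1
  simp only [add_zero] at this
  convert this using 2 with k
  have : (1 : ℂ) + k ≠ 0 := by
    rw [show ((1 : ℂ) + k) = ((1 + k : ℝ) : ℂ) by push_cast; ring]
    exact_mod_cast (by positivity : (1 + k : ℝ) ≠ 0)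
  field_simp
  ring

lemma exists_pos_le_abs {a : ℂ} (ha : ∀ n : ℕ, a ≠ -(n : ℂ)) :
    ∃ c > 0, ∀ n : ℕ, c ≤ ‖((n : ℂ) + a)‖ := by
  have hne : ∀ n : ℕ, ((n : ℂ) + a) ≠ 0 := by
    intro n h
    exact ha n (by linear_combination h)
  obtain ⟨N, hN⟩ := exists_nat_ge (‖a‖ + 1)
  refine ⟨(Finset.range (N + 1)).inf' (by simp) (fun n => min 1 (‖((n : ℂ) + a)‖)),
    ?_, ?_⟩
  · rw [gt_iff_lt, Finset.lt_inf'_iff]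
    intro n _
    exact lt_min one_pos (norm_pos_iff.mpr (hne n))
  · intro n
    rcases le_or_gt n N with h | h
    · exact le_trans (Finset.inf'_le _ (by simp [Nat.lt_succ_iff.mpr h])) (min_le_right _ _)
    · have h1 : (1 : ℝ) ≤ ‖((n : ℂ) + a)‖ := by
        have hn : (N : ℝ) ≤ n := by exact_mod_cast h.le
        have h2 : ‖a‖ + 1 ≤ (n : ℝ) := by linarith
        have h3 := norm_add_le ((n : ℂ) + a) (-a)
        rw [add_neg_cancel_right, norm_neg] at h3
        rw [Complex.norm_natCast] at h3
        linarith
      exact le_trans (le_trans (Finset.inf'_le (b := 0) _ (by simp)) (min_le_left _ _)) h1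

lemma cpow_norm_bound (s : ℂ) {a : ℂ} (ha : ∀ n : ℕ, a ≠ -(n : ℂ)) :
    ∃ K > 0, ∀ n : ℕ,
      (‖(((n : ℂ) + a) ^ s)‖)⁻¹ ≤ K * ((n : ℝ) + 1) ^ |s.re| := by
  obtain ⟨c, hc, hcle⟩ := exists_pos_le_abs ha
  have hne : ∀ n : ℕ, ((n : ℂ) + a) ≠ 0 := by
    intro n h
    exact ha n (by linear_combination h)
  set B : ℝ := max c⁻¹ 1 * (‖a‖ + 1) with hB
  have hB1 : (1 : ℝ) ≤ B := by
    rw [hB]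
    nlinarith [le_max_right c⁻¹ (1:ℝ), norm_nonneg a, le_max_left c⁻¹ (1:ℝ)]
  refine ⟨Real.exp (Real.pi * |s.im|) * B ^ |s.re|, by positivity, fun n => ?_⟩
  set A := ‖((n : ℂ) + a)‖ with hA
  have hA0 : 0 < A := norm_pos_iff.mpr (hne n)
  rw [Complex.norm_cpow_of_ne_zero (hne n) s, ← hA]
  rw [div_eq_mul_inv, mul_inv, inv_inv]
  have h1 : Real.exp (((n : ℂ) + a).arg * s.im) ≤ Real.exp (Real.pi * |s.im|) := by
    apply Real.exp_le_exp.mpr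
    calc ((n : ℂ) + a).arg * s.im ≤ |((n : ℂ) + a).arg * s.im| := le_abs_self _
      _ = |((n : ℂ) + a).arg| * |s.im| := abs_mul _ _
      _ ≤ Real.pi * |s.im| := by
          exact mul_le_mul_of_nonneg_right (Complex.abs_arg_le_pi _) (abs_nonneg _)
  have h2 : (A ^ s.re)⁻¹ ≤ B ^ |s.re| * ((n : ℝ) + 1) ^ |s.re| := by
    have hn1 : (1 : ℝ) ≤ (n : ℝ) + 1 := by linarith [Nat.cast_nonneg (α := ℝ) n]
    rcases le_or_gt 0 s.re with hs | hs
    · rw [_root_.abs_of_nonneg hs]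
      have : c ^ s.re ≤ A ^ s.re := Real.rpow_le_rpow hc.le (hcle n) hs
      have h3 : (A ^ s.re)⁻¹ ≤ (c ^ s.re)⁻¹ := by
        apply inv_anti₀ (Real.rpow_pos_of_pos hc _) this
      calc (A ^ s.re)⁻¹ ≤ (c ^ s.re)⁻¹ := h3
        _ = (c⁻¹) ^ s.re := by rw [← Real.inv_rpow hc.le]
        _ ≤ B ^ s.re := Real.rpow_le_rpow (by positivity) (by
              nlinarith [le_max_left c⁻¹ (1:ℝ), norm_nonneg a,
                inv_nonneg.mpr hc.le]) hs
        _ ≤ B ^ s.re * ((n : ℝ) + 1) ^ s.re := by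
            nlinarith [Real.one_le_rpow hn1 hs, Real.rpow_pos_of_pos (lt_of_lt_of_le one_pos hB1) s.re]
    · rw [_root_.abs_of_neg hs]
      rw [← Real.rpow_neg hA0.le]
      have hupper : A ≤ B * ((n : ℝ) + 1) := by
        have := norm_add_le ((n : ℂ) : ℂ) a
        rw [Complex.norm_natCast] at this
        rw [hA]
        have hBge : ‖a‖ + 1 ≤ B := by
          nlinarith [le_max_right c⁻¹ (1:ℝ), norm_nonneg a]
        nlinarith [norm_nonneg a, Nat.cast_nonneg (α := ℝ) n]
      calc A ^ (-s.re) ≤ (B * ((n : ℝ) + 1)) ^ (-s.re) :=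
            Real.rpow_le_rpow hA0.le hupper (by linarith)
        _ = B ^ (-s.re) * ((n : ℝ) + 1) ^ (-s.re) :=
            Real.mul_rpow (by positivity) (by positivity)
  calc (A ^ s.re)⁻¹ * Real.exp (((n : ℂ) + a).arg * s.im)
      ≤ (B ^ |s.re| * ((n : ℝ) + 1) ^ |s.re|) * Real.exp (Real.pi * |s.im|) := by
        exact mul_le_mul h2 h1 (by positivity) (by positivity)
    _ = Real.exp (Real.pi * |s.im|) * B ^ |s.re| * ((n : ℝ) + 1) ^ |s.re| := by ring

lemma abs_pch_succ (x : ℂ) (k : ℕ) :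
    ‖(pch x (k + 1))‖ = ‖(pch x k)‖ * ‖(x + k)‖ := by
  rw [pch_succ, norm_mul]

lemma summable_aux (η δ ξ : ℂ) (hξ : ∀ n : ℕ, ξ ≠ -(n : ℂ)) {x : ℝ} (T : ℝ) (hT : 0 ≤ T)
    (hx0 : 0 ≤ x) (hx : x < 1) :
    Summable (fun k : ℕ =>
      ‖(pch η k)‖ * ‖(pch δ k)‖ /
        (‖(pch ξ k)‖ * (k.factorial : ℝ)) * x ^ k * ((k : ℝ) + 1) ^ T) := by
  set a : ℕ → ℝ := fun k =>
    ‖(pch η k)‖ * ‖(pch δ k)‖ /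
      (‖(pch ξ k)‖ * (k.factorial : ℝ)) * x ^ k * ((k : ℝ) + 1) ^ T with ha
  have ha0 : ∀ k, 0 ≤ a k := by
    intro k
    rw [ha]
    positivity
  set q : ℕ → ℝ := fun k =>
    (‖(η + k)‖ / ((1 : ℝ) + k)) * (‖(δ + k)‖ / ‖(ξ + k)‖) * x *
      (((k : ℝ) + 2) / ((k : ℝ) + 1)) ^ T with hq
  have hξk : ∀ k : ℕ, (ξ + (k : ℂ)) ≠ 0 := by
    intro k h
    exact hξ k (eq_neg_of_add_eq_zero_left h)
  have hrec : ∀ k, a (k + 1) = a k * q k := by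
    intro k
    rw [ha, hq]
    simp only
    rw [abs_pch_succ, abs_pch_succ, abs_pch_succ]
    rw [Nat.factorial_succ, pow_succ]
    push_cast
    rw [Real.div_rpow (by positivity) (by positivity)]
    have h1 : ‖(pch ξ k)‖ ≠ 0 := by
      simpa using pch_ne_zero hξ k
    have h2 : ‖(ξ + k)‖ ≠ 0 := by
      simpa using hξk k
    have h3 : ((k.factorial : ℝ)) ≠ 0 := by positivity
    have h4 : ((k : ℝ) + 1) ≠ 0 := by positivity
    have h5 : ((k : ℝ) + 1) ^ T ≠ 0 := by positivity
    have h6 : ((k : ℝ) + 1 + 1) = ((k : ℝ) + 2) := by ring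
    rw [h6]
    field_simp
    ring
  have hq0 : Tendsto q atTop (𝓝 x) := by
    have l1 : Tendsto (fun k : ℕ => ‖(η + k)‖ / ((1 : ℝ) + k)) atTop (𝓝 1) := by
      have := (tendsto_ratio η).norm
      simp only [norm_one] at this
      convert this using 2 with k
      rw [norm_div]
      congr 1
      rw [show ((1 : ℂ) + k) = ((1 + k : ℝ) : ℂ) by push_cast; ring, Complex.norm_real,
        Real.norm_of_nonneg (by positivity)]
    have l2 : Tendsto (fun k : ℕ => ‖(δ + k)‖ / ‖(ξ + k)‖) atTop (𝓝 1) := by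
      have h12 : Tendsto (fun k : ℕ => ((δ + k) / (1 + k)) / ((ξ + k) / (1 + k))) atTop
          (𝓝 1) := by
        have := (tendsto_ratio δ).div (tendsto_ratio ξ) one_ne_zero
        simpa [Pi.div_def] using this
      have heq : ∀ k : ℕ, ((δ + k) / (1 + k)) / ((ξ + k) / (1 + k)) = (δ + k) / (ξ + k) := by
        intro k
        have hk : ((1 : ℂ) + k) ≠ 0 := by
          rw [show ((1 : ℂ) + k) = ((1 + k : ℝ) : ℂ) by push_cast; ring]
          exact_mod_cast (by positivity : (1 + k : ℝ) ≠ 0)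
        field_simp
      rw [Filter.tendsto_congr heq] at h12
      have := h12.norm
      simp only [norm_one, norm_div] at this
      exact this
    have l3 : Tendsto (fun k : ℕ => (((k : ℝ) + 2) / ((k : ℝ) + 1)) ^ T) atTop (𝓝 1) := by
      have hb : Tendsto (fun k : ℕ => ((k : ℝ) + 2) / ((k : ℝ) + 1)) atTop (𝓝 1) := by
        have h0 : Tendsto (fun k : ℕ => 1 + 1 / ((k : ℝ) + 1)) atTop (𝓝 (1 + 0)) :=
          tendsto_const_nhds.add tendsto_one_div_add_atTop_nhds_zero_nat
        rw [add_zero] at h0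
        convert h0 using 2 with k
        have h4 : ((k : ℝ) + 1) ≠ 0 := by positivity
        field_simp
        ring
      have := hb.rpow_const (p := T) (Or.inr hT)
      simpa using this
    have := ((l1.mul l2).mul (tendsto_const_nhds (x := x))).mul l3
    simpa using this
  set r : ℝ := (1 + x) / 2 with hr
  have hr1 : r < 1 := by rw [hr]; linarith
  have hxr : x < r := by rw [hr]; linarith
  apply summable_of_ratio_norm_eventually_le hr1
  have hev : ∀ᶠ k in atTop, q k < r := hq0.eventually_lt_const hxr
  filter_upwards [hev] with k hk
  rw [Real.norm_of_nonneg (ha0 (k + 1)), Real.norm_of_nonneg (ha0 k), hrec k, mul_comm r (a k)]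
  exact mul_le_mul_of_nonneg_left hk.le (ha0 k)

lemma summable_coef (η η' δ δ' ξ ξ' z t s a : ℂ)
    (hξ : ∀ n : ℕ, ξ ≠ -(n : ℂ)) (hξ' : ∀ n : ℕ, ξ' ≠ -(n : ℂ))
    (ha : ∀ n : ℕ, a ≠ -(n : ℂ))
    (hz : ‖z‖ < 1) (ht : ‖t‖ < 1) :
    Summable (fun p : ℕ × ℕ =>
      ‖(pch η p.1 * pch η' p.2 * pch δ p.1 * pch δ' p.2) /
          (pch ξ p.1 * pch ξ' p.2 * (p.1.factorial : ℂ) * (p.2.factorial : ℂ)) *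
        (z ^ p.1 * t ^ p.2 / (((p.1 : ℂ) + (p.2 : ℂ)) + a) ^ s)‖) := by
  obtain ⟨K, hK, hKb⟩ := cpow_norm_bound s ha
  set T : ℝ := |s.re| with hT
  have hT0 : 0 ≤ T := abs_nonneg _
  set a1 : ℕ → ℝ := fun k =>
    ‖(pch η k)‖ * ‖(pch δ k)‖ /
      (‖(pch ξ k)‖ * (k.factorial : ℝ)) * ‖z‖ ^ k * ((k : ℝ) + 1) ^ T
  set a2 : ℕ → ℝ := fun k =>
    ‖(pch η' k)‖ * ‖(pch δ' k)‖ /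
      (‖(pch ξ' k)‖ * (k.factorial : ℝ)) * ‖t‖ ^ k * ((k : ℝ) + 1) ^ T
  have hs1 : Summable a1 := summable_aux η δ ξ hξ T hT0 (norm_nonneg z) hz
  have hs2 : Summable a2 := summable_aux η' δ' ξ' hξ' T hT0 (norm_nonneg t) ht
  have hmul : Summable (fun p : ℕ × ℕ => K * (a1 p.1 * a2 p.2)) := by
    apply Summable.mul_left
    exact hs1.mul_of_nonneg hs2 (fun k => by positivity) (fun k => by positivity)
  apply Summable.of_nonneg_of_le (fun p => norm_nonneg _) _ hmul
  rintro ⟨k, l⟩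
  simp only [norm_mul, norm_div]
  rw [norm_pow, norm_pow]
  have hcast : ((k : ℂ) + (l : ℂ) + a) = (((k + l : ℕ) : ℂ) + a) := by push_cast; ring
  rw [hcast]
  have hb := hKb (k + l)
  have hn : ((k + l : ℕ) : ℝ) + 1 ≤ ((k : ℝ) + 1) * ((l : ℝ) + 1) := by
    push_cast
    nlinarith [Nat.cast_nonneg (α := ℝ) k, Nat.cast_nonneg (α := ℝ) l]
  have hpow : (((k + l : ℕ) : ℝ) + 1) ^ T ≤ ((k : ℝ) + 1) ^ T * ((l : ℝ) + 1) ^ T := by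
    rw [← Real.mul_rpow (by positivity) (by positivity)]
    exact Real.rpow_le_rpow (by positivity) hn hT0
  have hbound : (‖((((k + l : ℕ) : ℂ) + a) ^ s)‖)⁻¹ ≤
      K * (((k : ℝ) + 1) ^ T * ((l : ℝ) + 1) ^ T) := by
    calc (‖((((k + l : ℕ) : ℂ) + a) ^ s)‖)⁻¹
        ≤ K * (((k + l : ℕ) : ℝ) + 1) ^ T := hb
      _ ≤ K * (((k : ℝ) + 1) ^ T * ((l : ℝ) + 1) ^ T) := by
          exact mul_le_mul_of_nonneg_left hpow hK.le
  have hfacζ : (0:ℝ) < ‖((k.factorial : ℂ))‖ := by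
    simp [Complex.norm_natCast]
    positivity
  -- final: product bound
  have expand : ‖(pch η k)‖ * ‖(pch η' l)‖ * ‖(pch δ k)‖ *
        ‖(pch δ' l)‖ /
        (‖(pch ξ k)‖ * ‖(pch ξ' l)‖ * ‖((k.factorial : ℂ))‖ *
          ‖((l.factorial : ℂ))‖) *
        (‖z‖ ^ k * ‖t‖ ^ l / ‖((((k + l : ℕ) : ℂ) + a) ^ s)‖) =
      ((‖(pch η k)‖ * ‖(pch δ k)‖ /
          (‖(pch ξ k)‖ * (k.factorial : ℝ)) * ‖z‖ ^ k) *
        (‖(pch η' l)‖ * ‖(pch δ' l)‖ /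
          (‖(pch ξ' l)‖ * (l.factorial : ℝ)) * ‖t‖ ^ l)) *
        (‖((((k + l : ℕ) : ℂ) + a) ^ s)‖)⁻¹ := by
    rw [Complex.norm_natCast, Complex.norm_natCast]
    ring
  rw [expand]
  have h1 : 0 ≤ ‖(pch η k)‖ * ‖(pch δ k)‖ /
      (‖(pch ξ k)‖ * (k.factorial : ℝ)) * ‖z‖ ^ k := by positivity
  have h2 : 0 ≤ ‖(pch η' l)‖ * ‖(pch δ' l)‖ /
      (‖(pch ξ' l)‖ * (l.factorial : ℝ)) * ‖t‖ ^ l := by positivity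
  calc _ ≤ ((‖(pch η k)‖ * ‖(pch δ k)‖ /
          (‖(pch ξ k)‖ * (k.factorial : ℝ)) * ‖z‖ ^ k) *
        (‖(pch η' l)‖ * ‖(pch δ' l)‖ /
          (‖(pch ξ' l)‖ * (l.factorial : ℝ)) * ‖t‖ ^ l)) *
        (K * (((k : ℝ) + 1) ^ T * ((l : ℝ) + 1) ^ T)) := by
        exact mul_le_mul_of_nonneg_left hbound (by positivity)
    _ = K * (a1 k * a2 l) := by simp only [a1, a2]; ring

lemma cbeta_integrableOn {u v : ℂ} (hu : 0 < u.re) (hv : 0 < v.re) :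
    IntegrableOn (fun x : ℝ => (x : ℂ) ^ (u - 1) * (1 - (x : ℂ)) ^ (v - 1))
      (Ioo (0 : ℝ) 1) volume := by
  have := Complex.betaIntegral_convergent hu hv
  rwa [intervalIntegrable_iff_integrableOn_Ioo_of_le zero_le_one] at this

lemma cbeta_norm {u v : ℂ} {x : ℝ} (hx : x ∈ Ioo (0 : ℝ) 1) :
    ‖(x : ℂ) ^ (u - 1) * (1 - (x : ℂ)) ^ (v - 1)‖ =
      x ^ (u.re - 1) * (1 - x) ^ (v.re - 1) := by
  obtain ⟨h0, h1⟩ := hx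
  rw [norm_mul,
    show ((1 : ℂ) - (x : ℂ)) = (((1 - x : ℝ)) : ℂ) by push_cast; ring,
    Complex.norm_cpow_eq_rpow_re_of_pos h0, Complex.norm_cpow_eq_rpow_re_of_pos (by linarith)]
  simp [Complex.sub_re]

lemma realBeta_integrableOn {p q : ℝ} (hp : 0 < p) (hq : 0 < q) :
    IntegrableOn (fun x : ℝ => x ^ (p - 1) * (1 - x) ^ (q - 1)) (Ioo (0 : ℝ) 1) volume := by
  have h := (cbeta_integrableOn (u := (p : ℂ)) (v := (q : ℂ)) (by simpa) (by simpa)).norm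
  apply (IntegrableOn.congr_fun h _ measurableSet_Ioo : )
  intro x hx
  simp only
  rw [cbeta_norm hx]
  simp

lemma cbeta_Ioo_eq (u v : ℂ) :
    ∫ x in Ioo (0 : ℝ) 1, (x : ℂ) ^ (u - 1) * (1 - (x : ℂ)) ^ (v - 1) =
      Complex.betaIntegral u v := by
  rw [Complex.betaIntegral, intervalIntegral.integral_of_le zero_le_one,
    MeasureTheory.integral_Ioc_eq_integral_Ioo]

lemma ne_neg_nat_of_pos_re {w : ℂ} (hw : 0 < w.re) : ∀ n : ℕ, w ≠ -(n : ℂ) := by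
  intro n h
  rw [h] at hw
  simp only [Complex.neg_re, Complex.natCast_re] at hw
  nlinarith [Nat.cast_nonneg (α := ℝ) n]

lemma gamma_beta_pch {μ ν : ℂ} (hμ : 0 < μ.re) (hμν : μ.re < ν.re)
    (hν : ∀ n : ℕ, ν ≠ -(n : ℂ)) (n : ℕ) :
    Complex.Gamma ν / (Complex.Gamma μ * Complex.Gamma (ν - μ)) *
      Complex.betaIntegral (μ + n) (ν - μ) = pch μ n / pch ν n := by
  have hμ' : ∀ k : ℕ, μ ≠ -(k : ℂ) := ne_neg_nat_of_pos_re hμ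
  have hμn : 0 < (μ + (n : ℂ)).re := by
    simp only [Complex.add_re, Complex.natCast_re]
    have : (0:ℝ) ≤ n := Nat.cast_nonneg n
    linarith
  have hvm : 0 < (ν - μ).re := by
    simp only [Complex.sub_re]; linarith
  have h1 := Complex.Gamma_mul_Gamma_eq_betaIntegral hμn hvm
  rw [show μ + (n : ℂ) + (ν - μ) = ν + n by ring] at h1
  rw [Gamma_pch hμ' n, Gamma_pch hν n] at h1
  have hΓμ : Complex.Gamma μ ≠ 0 := Complex.Gamma_ne_zero hμ'
  have hΓν : Complex.Gamma ν ≠ 0 := Complex.Gamma_ne_zero hν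
  have hΓvm : Complex.Gamma (ν - μ) ≠ 0 := Complex.Gamma_ne_zero (ne_neg_nat_of_pos_re hvm)
  have hpν : pch ν n ≠ 0 := pch_ne_zero hν n
  field_simp
  linear_combination -h1

lemma subst_Ioi_to_Ioo (g : ℝ → ℂ) :
    ∫ y in Ioi (0 : ℝ), g y = ∫ x in Ioo (0 : ℝ) 1, ((1 - x) ^ 2)⁻¹ • g (x / (1 - x)) := by
  have himg : (fun x : ℝ => x / (1 - x)) '' Ioo 0 1 = Ioi 0 := by
    ext y
    constructor
    · rintro ⟨x, ⟨hx0, hx1⟩, rfl⟩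
      have hb : 0 < 1 - x := by linarith
      exact div_pos hx0 hb
    · intro hy
      have hy0 : (0 : ℝ) < y := hy
      refine ⟨y / (1 + y), ⟨by positivity, ?_⟩, ?_⟩
      · rw [div_lt_one (by linarith)]; linarith
      · have h1y : (1 : ℝ) + y ≠ 0 := by positivity
        field_simp
        ring
  have hderiv : ∀ x ∈ Ioo (0 : ℝ) 1,
      HasDerivWithinAt (fun x : ℝ => x / (1 - x)) (((1 - x) ^ 2)⁻¹) (Ioo 0 1) x := by
    intro x ⟨hx0, hx1⟩
    have hb : (1 : ℝ) - x ≠ 0 := by intro h; linarith [h]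
    have := (hasDerivAt_id x).div ((hasDerivAt_id x).const_sub 1) hb
    have heq : (1 * (1 - id x) - id x * -1) / (1 - id x) ^ 2 = ((1 - x) ^ 2)⁻¹ := by
      simp only [id]
      field_simp
      ring
    rw [heq] at this
    exact this.hasDerivWithinAt
  have hinj : InjOn (fun x : ℝ => x / (1 - x)) (Ioo 0 1) := by
    rintro x ⟨hx0, hx1⟩ y ⟨hy0, hy1⟩ h
    have hbx : (1 : ℝ) - x ≠ 0 := by intro hh; linarith
    have hby : (1 : ℝ) - y ≠ 0 := by intro hh; linarith
    field_simp at h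
    linarith
  rw [← himg, integral_image_eq_integral_abs_deriv_smul measurableSet_Ioo hderiv hinj]
  apply setIntegral_congr_fun measurableSet_Ioo
  intro x ⟨hx0, hx1⟩
  have hb : (0 : ℝ) < 1 - x := by linarith
  simp only
  rw [_root_.abs_of_pos (by positivity)]

lemma integrand_transform (μ ν η η' δ δ' ξ ξ' z t s a : ℂ) {x : ℝ}
    (hx : x ∈ Ioo (0 : ℝ) 1) :
    ((1 - x) ^ 2)⁻¹ • ((↑(x / (1 - x)) : ℂ) ^ (μ - 1) / (1 + (↑(x / (1 - x)) : ℂ)) ^ ν *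
        Psi η η' δ δ' ξ ξ' (z * ↑(x / (1 - x)) / (1 + ↑(x / (1 - x))))
          (t * ↑(x / (1 - x)) / (1 + ↑(x / (1 - x)))) s a) =
      (x : ℂ) ^ (μ - 1) * (((1 - x : ℝ)) : ℂ) ^ (ν - μ - 1) *
        Psi η η' δ δ' ξ ξ' (z * (x : ℂ)) (t * (x : ℂ)) s a := by
  obtain ⟨hx0, hx1⟩ := hx
  have hb : (0 : ℝ) < 1 - x := by linarith
  set w : ℂ := (((1 - x : ℝ)) : ℂ) with hwdef
  have hw : w ≠ 0 := by
    rw [hwdef]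
    exact_mod_cast hb.ne'
  have hwx : w = 1 - (x : ℂ) := by rw [hwdef]; push_cast; ring
  have harg : w.arg ≠ Real.pi := by
    rw [hwdef, Complex.arg_ofReal_of_nonneg hb.le]
    exact Real.pi_ne_zero.symm
  have hx' : (1 : ℂ) - (x : ℂ) ≠ 0 := by rw [← hwx]; exact hw
  have e1 : (1 : ℂ) + (↑(x / (1 - x)) : ℂ) = w⁻¹ := by
    rw [Complex.ofReal_div, ← hwdef, hwx]
    field_simp
    ring
  have e2 : ∀ c : ℂ, c * ↑(x / (1 - x)) / (1 + ↑(x / (1 - x))) = c * (x : ℂ) := by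
    intro c
    rw [e1, div_eq_mul_inv, inv_inv, Complex.ofReal_div, ← hwdef, hwx]
    field_simp
  have e3 : (↑(x / (1 - x)) : ℂ) ^ (μ - 1) = (x : ℂ) ^ (μ - 1) * (w ^ (μ - 1))⁻¹ := by
    rw [show x / (1 - x) = x * (1 - x)⁻¹ from div_eq_mul_inv x _, Complex.ofReal_mul,
      Complex.mul_cpow_ofReal_nonneg hx0.le (inv_nonneg.mpr hb.le), Complex.ofReal_inv,
      ← hwdef, Complex.inv_cpow _ _ harg]
  have e4 : ((1 : ℂ) + ↑(x / (1 - x))) ^ ν = (w ^ ν)⁻¹ := by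
    rw [e1, Complex.inv_cpow _ _ harg]
  have key : ((w ^ (2 : ℕ)) * w ^ (μ - 1))⁻¹ * w ^ ν = w ^ (ν - μ - 1) := by
    rw [← Complex.cpow_natCast w 2, ← Complex.cpow_add _ _ hw, mul_comm, ← div_eq_mul_inv,
      ← Complex.cpow_sub _ _ hw]
    norm_num
    congr 1
    ring
  rw [e2, e2, e3, e4, Complex.real_smul, div_eq_mul_inv, inv_inv]
  push_cast
  rw [show ((1 : ℂ) - (x : ℂ)) = w from hwx.symm, ← key]
  ring

theorem Phi_beta_integral_rep (μ η η' δ δ' ν ξ ξ' z t s a : ℂ)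
    (hν : ∀ n : ℕ, ν ≠ -(n : ℂ)) (hξ : ∀ n : ℕ, ξ ≠ -(n : ℂ))
    (hξ' : ∀ n : ℕ, ξ' ≠ -(n : ℂ)) (ha : ∀ n : ℕ, a ≠ -(n : ℂ))
    (hμ : 0 < μ.re) (hμν : μ.re < ν.re)
    (hz : ‖z‖ < 1) (ht : ‖t‖ < 1) :
    Phi μ η η' δ δ' ν ξ ξ' z t s a =
      Complex.Gamma ν / (Complex.Gamma μ * Complex.Gamma (ν - μ)) *
        ∫ y in Ioi (0 : ℝ),
          (y : ℂ) ^ (μ - 1) / (1 + (y : ℂ)) ^ ν *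
            Psi η η' δ δ' ξ ξ' (z * y / (1 + y)) (t * y / (1 + y)) s a := by
  have hvm : 0 < (ν - μ).re := by
    simp only [Complex.sub_re]; linarith
  set F : ℕ × ℕ → ℝ → ℂ := fun p x =>
    ((x : ℂ) ^ (μ - 1) * (((1 - x : ℝ)) : ℂ) ^ (ν - μ - 1)) *
      ((pch η p.1 * pch η' p.2 * pch δ p.1 * pch δ' p.2) /
          (pch ξ p.1 * pch ξ' p.2 * (p.1.factorial : ℂ) * (p.2.factorial : ℂ)) *
        ((z * x) ^ p.1 * (t * x) ^ p.2 / ((p.1 : ℂ) + (p.2 : ℂ) + a) ^ s)) with hF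
  set coef : ℕ × ℕ → ℂ := fun p =>
    (pch η p.1 * pch η' p.2 * pch δ p.1 * pch δ' p.2) /
        (pch ξ p.1 * pch ξ' p.2 * (p.1.factorial : ℂ) * (p.2.factorial : ℂ)) *
      (z ^ p.1 * t ^ p.2 / ((p.1 : ℂ) + (p.2 : ℂ) + a) ^ s) with hcoef
  have hμn : ∀ n : ℕ, 0 < (μ + (n : ℂ)).re := by
    intro n
    simp only [Complex.add_re, Complex.natCast_re]
    have : (0:ℝ) ≤ n := Nat.cast_nonneg n
    linarith
  -- termwise description of F on Ioo 0 1
  have term_eq : ∀ p : ℕ × ℕ, ∀ x ∈ Ioo (0:ℝ) 1, F p x =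
      coef p * ((x : ℂ) ^ (μ + ((p.1 + p.2 : ℕ) : ℂ) - 1) * (1 - (x : ℂ)) ^ (ν - μ - 1)) := by
    rintro ⟨k, l⟩ x ⟨hx0, hx1⟩
    have hx0C : (x : ℂ) ≠ 0 := by exact_mod_cast hx0.ne'
    have hpow : ((x : ℂ)) ^ (μ + ((k + l : ℕ) : ℂ) - 1) =
        (x : ℂ) ^ (μ - 1) * ((x : ℂ) ^ k * (x : ℂ) ^ l) := by
      rw [show μ + ((k + l : ℕ) : ℂ) - 1 = (μ - 1) + ((k + l : ℕ) : ℂ) by ring,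
        Complex.cpow_add _ _ hx0C, Complex.cpow_natCast, pow_add]
    rw [hF, hcoef]
    simp only
    rw [hpow, mul_pow, mul_pow, show (((1 - x : ℝ)) : ℂ) = 1 - (x : ℂ) by push_cast; ring]
    ring
  -- integrability of each F p
  have hFint : ∀ p : ℕ × ℕ, IntegrableOn (F p) (Ioo (0:ℝ) 1) volume := by
    intro p
    have h := (cbeta_integrableOn (hμn (p.1 + p.2)) hvm).const_mul (coef p)
    apply (IntegrableOn.congr_fun h _ measurableSet_Ioo : )
    intro x hx
    exact (term_eq p x hx).symm
  -- value of each integral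
  have hFval : ∀ p : ℕ × ℕ, ∫ x in Ioo (0:ℝ) 1, F p x =
      coef p * Complex.betaIntegral (μ + ((p.1 + p.2 : ℕ) : ℂ)) (ν - μ) := by
    intro p
    rw [setIntegral_congr_fun measurableSet_Ioo (term_eq p), MeasureTheory.integral_const_mul,
      cbeta_Ioo_eq]
  -- bound on the integrals of norms
  set B₀ : ℝ := ∫ x in Ioo (0:ℝ) 1, x ^ (μ.re - 1) * (1 - x) ^ ((ν - μ).re - 1) with hB₀
  have hB₀0 : 0 ≤ B₀ := by
    rw [hB₀]
    apply setIntegral_nonneg measurableSet_Ioo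
    intro x hx
    have h1 := hx.1
    have h2 : (0:ℝ) ≤ 1 - x := by linarith [hx.2]
    positivity
  have hnormval : ∀ p : ℕ × ℕ, ∫ x in Ioo (0:ℝ) 1, ‖F p x‖ ≤ ‖coef p‖ * B₀ := by
    intro p
    have heq : ∀ x ∈ Ioo (0:ℝ) 1, ‖F p x‖ =
        ‖coef p‖ * (x ^ (μ.re + (p.1 + p.2 : ℕ) - 1) * (1 - x) ^ ((ν - μ).re - 1)) := by
      intro x hx
      rw [term_eq p x hx, norm_mul, cbeta_norm hx,
        show (μ + ((p.1 + p.2 : ℕ) : ℂ)).re = μ.re + ((p.1 + p.2 : ℕ) : ℝ) from by simp]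
    rw [setIntegral_congr_fun measurableSet_Ioo heq, MeasureTheory.integral_const_mul]
    apply mul_le_mul_of_nonneg_left _ (norm_nonneg _)
    rw [hB₀]
    have hint1 : IntegrableOn
        (fun x : ℝ => x ^ (μ.re + (p.1 + p.2 : ℕ) - 1) * (1 - x) ^ ((ν - μ).re - 1))
        (Ioo (0:ℝ) 1) volume := by
      have h0n : (0:ℝ) < μ.re + (p.1 + p.2 : ℕ) := by
        have : (0:ℝ) ≤ (p.1 + p.2 : ℕ) := Nat.cast_nonneg _
        linarith
      exact realBeta_integrableOn h0n hvm
    have hint0 : IntegrableOn (fun x : ℝ => x ^ (μ.re - 1) * (1 - x) ^ ((ν - μ).re - 1))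
        (Ioo (0:ℝ) 1) volume := realBeta_integrableOn hμ hvm
    apply setIntegral_mono_on hint1 hint0 measurableSet_Ioo
    intro x ⟨hx0, hx1⟩
    apply mul_le_mul_of_nonneg_right _ (Real.rpow_nonneg (by linarith) _)
    apply Real.rpow_le_rpow_of_exponent_ge hx0 hx1.le
    have : (0:ℝ) ≤ (p.1 + p.2 : ℕ) := Nat.cast_nonneg _
    linarith
  -- summability of the norm integrals
  have hFsum : Summable (fun p : ℕ × ℕ => ∫ x in Ioo (0:ℝ) 1, ‖F p x‖) := by
    apply Summable.of_nonneg_of_le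
      (fun p => setIntegral_nonneg measurableSet_Ioo (fun x _ => norm_nonneg _))
      hnormval
    exact (summable_coef η η' δ δ' ξ ξ' z t s a hξ hξ' ha hz ht).mul_right B₀
  -- the interchange
  have hswap : ∑' p : ℕ × ℕ, ∫ x in Ioo (0:ℝ) 1, F p x =
      ∫ x in Ioo (0:ℝ) 1, ∑' p : ℕ × ℕ, F p x :=
    MeasureTheory.integral_tsum_of_summable_integral_norm hFint hFsum
  -- rewrite the RHS integral
  have hrhs : (∫ y in Ioi (0 : ℝ),
        (y : ℂ) ^ (μ - 1) / (1 + (y : ℂ)) ^ ν *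
          Psi η η' δ δ' ξ ξ' (z * y / (1 + y)) (t * y / (1 + y)) s a) =
      ∑' p : ℕ × ℕ, ∫ x in Ioo (0:ℝ) 1, F p x := by
    rw [subst_Ioi_to_Ioo, hswap]
    apply setIntegral_congr_fun measurableSet_Ioo
    intro x hx
    dsimp only
    rw [integrand_transform μ ν η η' δ δ' ξ ξ' z t s a hx, Psi, ← tsum_mul_left]
  rw [hrhs, ← tsum_mul_left, Phi]
  apply tsum_congr
  intro p
  rw [hFval p, show Complex.Gamma ν / (Complex.Gamma μ * Complex.Gamma (ν - μ)) *
      (coef p * Complex.betaIntegral (μ + ((p.1 + p.2 : ℕ) : ℂ)) (ν - μ)) =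
      coef p * (Complex.Gamma ν / (Complex.Gamma μ * Complex.Gamma (ν - μ)) *
        Complex.betaIntegral (μ + ((p.1 + p.2 : ℕ) : ℂ)) (ν - μ)) from by ring,
    gamma_beta_pch hμ hμν hν (p.1 + p.2), hcoef]
  simp only
  ring
end
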